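/- arXiv:1809.09285 — 6 statements merged into one kernel-verified Lean document; each statement's English description precedes it below -/
import Mathlib

section
/- Let p be an odd prime and K = ℚ(ζ) the p-th cyclotomic field. If a nonzero rational number x is a p-th power of an element of K, then x is a p-th power of a rational number; that is, K^{×p} ∩ ℚ^× = ℚ^{×p}. -/
/-- Let `p` be an odd prime and `K = ℚ(ζ)` the `p`-th cyclotomic field.
If a nonzero rational number `x` is a `p`-th power of an element of `K`, then `x` is a
`p`-th power of a rational number; that is, `K^{×p} ∩ ℚ^× = ℚ^{×p}`. -/
theorem statement2 (p : ℕ) (hp : p.Prime) (hodd : Odd p)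
    (K : Type*) [Field K] [Algebra ℚ K]
    [IsCyclotomicExtension {p} ℚ K]
    (x : ℚ) (hx : x ≠ 0) (y : K) (hy : y ^ p = algebraMap ℚ K x) :
    ∃ z : ℚ, z ^ p = x := by
  by_contra h
  push_neg at h
  have hirr : Irreducible (Polynomial.X ^ p - Polynomial.C x) :=
    X_pow_sub_C_irreducible_of_prime hp h
  have hroot : Polynomial.aeval y (Polynomial.X ^ p - Polynomial.C x) = 0 := by
    simp [hy]
  have hint : IsIntegral ℚ y := by
    refine ⟨Polynomial.X ^ p - Polynomial.C x, ?_, ?_⟩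
    · exact Polynomial.monic_X_pow_sub_C x hp.ne_zero
    · simpa [Polynomial.eval₂_sub, hy] using hroot
  have hmin : minpoly ℚ y = Polynomial.X ^ p - Polynomial.C x :=
    (minpoly.eq_of_irreducible_of_monic hirr hroot
      (Polynomial.monic_X_pow_sub_C x hp.ne_zero)).symm
  have hdvd : (minpoly ℚ y).natDegree ∣ Module.finrank ℚ K := minpoly.degree_dvd hint
  rw [hmin] at hdvd
  have hdeg : (Polynomial.X ^ p - Polynomial.C x : Polynomial ℚ).natDegree = p := by
    simpa using Polynomial.natDegree_X_pow_sub_C (n := p) (a := x)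
  rw [hdeg] at hdvd
  have hfin : Module.finrank ℚ K = Nat.totient p := by
    haveI : NeZero p := ⟨hp.ne_zero⟩
    have := IsCyclotomicExtension.finrank (n := p) K
      (Polynomial.cyclotomic.irreducible_rat hp.pos)
    simpa using this
  rw [hfin, Nat.totient_prime hp] at hdvd
  have h2 := hp.two_le
  have := Nat.le_of_dvd (by omega : 0 < p - 1) hdvd
  omega
end

section
/- Let p be an odd prime, q a prime power with q ≡ −1 (mod p), and F a finite field with q² elements. Let χ be a multiplicative character of F with values in ℂ of order exactly p, and let r and s be positive integers with r + s < p. Then the Jacobi sum J(χ^r, χ^s) = ∑_{x ∈ F} χ^r(x)·χ^s(1 − x) equals q. -/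
set_option maxHeartbeats 1000000

/-- Let `p` be an odd prime, `q` a prime power with `q ≡ -1 (mod p)`, and
`F` a finite field with `q²` elements. Let `χ` be a multiplicative character of `F` with
values in `ℂ` of order exactly `p`, and let `r, s` be positive integers with `r + s < p`.
Then the Jacobi sum `J(χ^r, χ^s) = ∑_{x ∈ F} χ^r(x)·χ^s(1 - x)` equals `q`. -/
theorem statement3 (p : ℕ) (hp : p.Prime) (hodd : Odd p)
    (q : ℕ) (hq : IsPrimePow q) (hmod : (q : ZMod p) = -1)
    (F : Type*) [Field F] [Fintype F] (hcard : Fintype.card F = q ^ 2)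
    (χ : MulChar F ℂ) (hχ : orderOf χ = p)
    (r s : ℕ) (hr : 0 < r) (hs : 0 < s) (hrs : r + s < p) :
    ∑ x : F, (χ ^ r) x * (χ ^ s) (1 - x) = (q : ℂ) := by
  classical
  have hq2 : 2 ≤ q := hq.two_le
  have hp2 : p ≠ 2 := by
    rintro rfl
    exact (Nat.not_odd_iff_even.mpr (by decide)) hodd
  have hp3 : 3 ≤ p := by
    have := hp.two_le
    omega
  have hpd2 : ¬ p ∣ 2 := fun h => by
    have := Nat.le_of_dvd (by norm_num) h
    omega
  have hpdq1 : ¬ p ∣ (q - 1) := by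
    intro h
    have h1 : ((q - 1 : ℕ) : ZMod p) = 0 := (ZMod.natCast_eq_zero_iff _ _).mpr h
    have h2 : ((q : ℕ) : ZMod p) = 1 := by
      have h3 : (((q - 1) + 1 : ℕ) : ZMod p) = ((q : ℕ) : ZMod p) := by
        congr 1
        omega
      push_cast at h3
      rw [h1, zero_add] at h3
      exact h3.symm
    rw [hmod] at h2
    have h3 : ((2 : ℕ) : ZMod p) = 0 := by push_cast; linear_combination -h2
    exact hpd2 ((ZMod.natCast_eq_zero_iff 2 p).mp h3)
  have hcop : Nat.Coprime p (2 * (q - 1)) :=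
    Nat.Coprime.mul_right ((hp.coprime_iff_not_dvd).mpr hpd2)
      ((hp.coprime_iff_not_dvd).mpr hpdq1)
  -- characteristic
  set c := ringChar F with hc
  haveI : CharP F c := ringChar.charP F
  have hcprime : c.Prime := CharP.char_is_prime F c
  haveI : Fact c.Prime := ⟨hcprime⟩
  haveI : NeZero c := ⟨hcprime.ne_zero⟩
  obtain ⟨ℓ, n, hℓ, hn, hqe⟩ := hq
  have hℓp : ℓ.Prime := hℓ.nat_prime
  have hcℓ : c = ℓ := by
    obtain ⟨m, _, hm⟩ := FiniteField.card F c
    have h1 : c ∣ q ^ 2 := by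
      rw [← hcard, hm]
      exact dvd_pow_self c (by positivity)
    have h2 : c ∣ ℓ ^ (n * 2) := by rwa [pow_mul, hqe]
    exact (Nat.prime_dvd_prime_iff_eq hcprime hℓp).mp (hcprime.dvd_of_dvd_pow h2)
  have hqc : c ^ n = q := by rw [hcℓ]; exact hqe
  -- Frobenius-type identities
  have hfrob : ∀ x y : F, (x + y) ^ q = x ^ q + y ^ q := by
    intro x y
    rw [← hqc]
    exact add_pow_char_pow x y c n
  have hfrobs : ∀ x y : F, (x - y) ^ q = x ^ q - y ^ q := by
    intro x y
    rw [← hqc]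
    exact sub_pow_char_pow x y (p := c) n
  have hqq : ∀ x : F, (x ^ q) ^ q = x := by
    intro x
    rw [← pow_mul, ← sq, ← hcard]
    exact FiniteField.pow_card x
  -- the "trace" map x ↦ x + x^q
  set T : F →+ F := AddMonoidHom.mk' (fun x => x + x ^ q)
    (fun a b => by
      show (a + b) + (a + b) ^ q = (a + a ^ q) + (b + b ^ q)
      rw [hfrob]; ring) with hT
  have hTapp : ∀ x : F, T x = x + x ^ q := fun _ => rfl
  set Kf : Finset F := Finset.univ.filter (fun t => t ^ q = t) with hKf
  set kerf : Finset F := Finset.univ.filter (fun x => x + x ^ q = 0) with hkerf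
  -- root counting
  have hcount : ∀ cc : F, (Finset.univ.filter (fun x : F => x ^ q = cc * x)).card ≤ q := by
    intro cc
    set P : Polynomial F := Polynomial.X ^ q - Polynomial.C cc * Polynomial.X with hP
    have hdeg : P.natDegree = q := by
      rw [hP, Polynomial.natDegree_sub_eq_left_of_natDegree_lt, Polynomial.natDegree_X_pow]
      calc (Polynomial.C cc * Polynomial.X).natDegree
          ≤ (Polynomial.X : Polynomial F).natDegree := Polynomial.natDegree_C_mul_le _ _
        _ < (Polynomial.X ^ q : Polynomial F).natDegree := by
            rw [Polynomial.natDegree_X, Polynomial.natDegree_X_pow]; omega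
    have hP0 : P ≠ 0 := by
      intro h
      rw [h, Polynomial.natDegree_zero] at hdeg
      omega
    calc (Finset.univ.filter (fun x : F => x ^ q = cc * x)).card
        ≤ P.roots.toFinset.card := by
          apply Finset.card_le_card
          intro x hx
          rw [Finset.mem_filter] at hx
          rw [Multiset.mem_toFinset, Polynomial.mem_roots hP0]
          simp only [hP, Polynomial.IsRoot, Polynomial.eval_sub, Polynomial.eval_pow,
            Polynomial.eval_X, Polynomial.eval_mul, Polynomial.eval_C]
          rw [hx.2]
          ring
      _ ≤ Multiset.card P.roots := Multiset.toFinset_card_le _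
      _ ≤ P.natDegree := Polynomial.card_roots' P
      _ = q := hdeg
  have hK_le : Kf.card ≤ q := by
    refine le_trans (Finset.card_le_card ?_) (hcount 1)
    intro x hx
    rw [hKf, Finset.mem_filter] at hx
    rw [Finset.mem_filter]
    exact ⟨Finset.mem_univ _, by rw [one_mul]; exact hx.2⟩
  have hker_le : kerf.card ≤ q := by
    refine le_trans (Finset.card_le_card ?_) (hcount (-1))
    intro x hx
    rw [hkerf, Finset.mem_filter] at hx
    rw [Finset.mem_filter]
    refine ⟨Finset.mem_univ _, ?_⟩
    rw [neg_one_mul]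
    linear_combination hx.2
  -- range of T sits inside Kf
  set Rf : Finset F := Finset.univ.filter (fun t => ∃ x : F, x + x ^ q = t) with hRf
  have hRK : Rf ⊆ Kf := by
    intro t ht
    rw [hRf, Finset.mem_filter] at ht
    rw [hKf, Finset.mem_filter]
    obtain ⟨x, hx⟩ := ht.2
    refine ⟨Finset.mem_univ _, ?_⟩
    rw [← hx, hfrob, hqq]
    ring
  -- cardinalities via the first isomorphism theorem
  have hcards : Nat.card T.range * Nat.card T.ker = q ^ 2 := by
    have h1 := AddSubgroup.card_eq_card_quotient_mul_card_addSubgroup (T.ker)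
    have h2 : Nat.card (F ⧸ T.ker) = Nat.card T.range :=
      Nat.card_congr (QuotientAddGroup.quotientKerEquivRange T).toEquiv
    rw [h2] at h1
    rw [← h1, Nat.card_eq_fintype_card, hcard]
  have hkerT : Nat.card T.ker = kerf.card := by
    rw [Nat.card_eq_fintype_card, Fintype.card_subtype]
    congr 1
    ext x
    simp [hkerf, AddMonoidHom.mem_ker, hTapp]
  have hrangeT : Nat.card T.range = Rf.card := by
    rw [Nat.card_eq_fintype_card]
    apply Fintype.card_of_subtype
    intro t
    rw [hRf, Finset.mem_filter, AddMonoidHom.mem_range]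
    constructor
    · rintro ⟨-, x, hx⟩
      exact ⟨x, by rw [hTapp, hx]⟩
    · rintro ⟨x, hx⟩
      exact ⟨Finset.mem_univ _, x, by rw [← hTapp, hx]⟩
  have hR_le : Rf.card ≤ q := le_trans (Finset.card_le_card hRK) hK_le
  rw [hrangeT, hkerT] at hcards
  have hker_eq : kerf.card = q := by
    refine le_antisymm hker_le ?_
    have h1 : q * q ≤ q * kerf.card := by
      calc q * q = q ^ 2 := (sq q).symm
        _ = Rf.card * kerf.card := hcards.symm
        _ ≤ q * kerf.card := Nat.mul_le_mul_right _ hR_le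
    exact Nat.le_of_mul_le_mul_left h1 (by omega)
  have hRf_eq : Rf.card = q := by
    refine le_antisymm hR_le ?_
    have h1 : q * q ≤ Rf.card * q := by
      calc q * q = q ^ 2 := (sq q).symm
        _ = Rf.card * kerf.card := hcards.symm
        _ ≤ Rf.card * q := Nat.mul_le_mul_left _ hker_le
    exact Nat.le_of_mul_le_mul_right h1 (by omega)
  have hKf_eq : Kf.card = q := le_antisymm hK_le (hRf_eq ▸ Finset.card_le_card hRK)
  -- a nontrivial additive character of F
  letI : Algebra (ZMod c) F := ZMod.algebra F c
  have hζ : IsPrimitiveRoot (Complex.exp (2 * Real.pi * Complex.I / c)) c :=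
    Complex.isPrimitiveRoot_exp c hcprime.ne_zero
  set ψ₀ : AddChar (ZMod c) ℂ := AddChar.zmodChar c hζ.pow_eq_one with hψ₀def
  have hψ₀ : ∀ a : ZMod c, ψ₀ a = 1 → a = 0 := by
    have hprim := AddChar.zmodChar_primitive_of_primitive_root c hζ
    intro a ha
    exact (hprim.zmod_char_eq_one_iff c a).mp ha
  set ψF : AddChar F ℂ := ψ₀.compAddMonoidHom (Algebra.trace (ZMod c) F).toAddMonoidHom with hψF
  obtain ⟨b, hb⟩ : ∃ b : F, ψF b ≠ 1 := by
    obtain ⟨a, ha⟩ := FiniteField.trace_to_zmod_nondegenerate F (one_ne_zero (α := F))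
    rw [one_mul] at ha
    exact ⟨a, fun h => ha (hψ₀ _ h)⟩
  set ψ₁ : AddChar F ℂ := ψF.mulShift b with hψ₁def
  have hψ₁ : ψ₁ 1 ≠ 1 := by
    rw [hψ₁def, AddChar.mulShift_apply, mul_one]
    exact hb
  -- the additive character Ψ = ψ₁ ∘ T
  set Ψ : AddChar F ℂ := ψ₁.compAddMonoidHom T with hΨdef
  have hΨapp : ∀ x : F, Ψ x = ψ₁ (x + x ^ q) := fun x => rfl
  -- sum of ψ₁ over Kf vanishes
  have hsumK : ∑ t ∈ Kf, ψ₁ t = 0 := by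
    have h1 : ∑ t ∈ Kf, ψ₁ (1 + t) = ∑ t ∈ Kf, ψ₁ t := by
      refine Finset.sum_nbij' (fun t => 1 + t) (fun t => t - 1) ?_ ?_ ?_ ?_ ?_
      · intro a ha
        rw [hKf, Finset.mem_filter] at ha ⊢
        exact ⟨Finset.mem_univ _, by rw [hfrob, one_pow, ha.2]⟩
      · intro a ha
        rw [hKf, Finset.mem_filter] at ha ⊢
        exact ⟨Finset.mem_univ _, by rw [hfrobs, one_pow, ha.2]⟩
      · intro a _; ring
      · intro a _; ring
      · intro a _; rfl
    simp_rw [AddChar.map_add_eq_mul, ← Finset.mul_sum] at h1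
    exact eq_zero_of_mul_eq_self_left hψ₁ h1
  -- main computation: the Gauss sums equal q
  have key : ∀ η : MulChar F ℂ, η ≠ 1 → η ^ p = 1 → gaussSum η Ψ = (q : ℂ) := by
    intro η hη1 hηp
    have hpow1 : ∀ z : ℂ, z ^ p = 1 → z ^ (2 * (q - 1)) = 1 → z = 1 := by
      intro z h1 h2
      have ho1 : orderOf z ∣ p := orderOf_dvd_of_pow_eq_one h1
      have ho2 : orderOf z ∣ 2 * (q - 1) := orderOf_dvd_of_pow_eq_one h2
      have h3 : orderOf z ∣ 1 := hcop ▸ Nat.dvd_gcd ho1 ho2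
      rw [Nat.dvd_one] at h3
      exact orderOf_eq_one_iff.mp h3
    have hηpz : ∀ t : F, t ≠ 0 → η t ^ p = 1 := by
      intro t ht0
      rw [← MulChar.pow_apply' η hp.ne_zero t, hηp,
        MulChar.one_apply (isUnit_iff_ne_zero.mpr ht0)]
    have htriv : ∀ t : F, t ^ q = t → t ≠ 0 → η t = 1 := by
      intro t ht ht0
      have hq1 : t ^ (q - 1) = 1 := by
        have h1 : t ^ (q - 1) * t = 1 * t := by
          rw [← pow_succ, Nat.sub_add_cancel (by omega), ht, one_mul]
        exact mul_right_cancel₀ ht0 h1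
      refine hpow1 _ (hηpz t ht0) ?_
      rw [← map_pow, mul_comm, pow_mul, hq1, one_pow, map_one]
    have htrivker : ∀ x : F, x + x ^ q = 0 → x ≠ 0 → η x = 1 := by
      intro x hx hx0
      have hq1 : x ^ (q - 1) = -1 := by
        have h1 : x ^ (q - 1) * x = -1 * x := by
          rw [← pow_succ, Nat.sub_add_cancel (by omega), neg_one_mul]
          linear_combination hx
        exact mul_right_cancel₀ hx0 h1
      refine hpow1 _ (hηpz x hx0) ?_
      rw [← map_pow, mul_comm, pow_mul, hq1, neg_one_sq, map_one]
    set S : F → ℂ := fun t => ∑ x ∈ Finset.univ.filter (fun x : F => x + x ^ q = t), η x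
      with hS
    have hmapsto : ∀ x : F, x ∈ Finset.univ → x + x ^ q ∈ Kf := by
      intro x _
      rw [hKf, Finset.mem_filter]
      exact ⟨Finset.mem_univ _, by rw [hfrob, hqq]; ring⟩
    have hg : gaussSum η Ψ = ∑ t ∈ Kf, ψ₁ t * S t := by
      show ∑ x : F, η x * Ψ x = _
      rw [← Finset.sum_fiberwise_of_maps_to hmapsto (fun x => η x * Ψ x)]
      refine Finset.sum_congr rfl fun t _ => ?_
      simp only [hS]
      rw [Finset.mul_sum]
      refine Finset.sum_congr rfl fun x hx => ?_
      rw [Finset.mem_filter] at hx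
      rw [hΨapp, hx.2]
      ring
    have h0K : (0 : F) ∈ Kf := by
      rw [hKf, Finset.mem_filter]
      exact ⟨Finset.mem_univ _, by rw [zero_pow (by omega : q ≠ 0)]⟩
    have hfilter0 : (Finset.univ.filter (fun x : F => x + x ^ q = 0)) = kerf := by
      ext x
      rw [hkerf]
    have h0k : (0 : F) ∈ kerf := by
      rw [hkerf, Finset.mem_filter]
      exact ⟨Finset.mem_univ _, by rw [zero_pow (by omega : q ≠ 0), add_zero]⟩
    have hS0 : S 0 = (q : ℂ) - 1 := by
      simp only [hS]
      rw [hfilter0, ← Finset.add_sum_erase _ _ h0k, MulChar.map_zero, zero_add]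
      have hone : ∀ x ∈ kerf.erase 0, η x = 1 := by
        intro x hx
        rw [Finset.mem_erase] at hx
        have hx2 := hx.2
        rw [hkerf, Finset.mem_filter] at hx2
        exact htrivker x hx2.2 hx.1
      rw [Finset.sum_congr rfl hone, Finset.sum_const, Finset.card_erase_of_mem h0k,
        hker_eq, nsmul_eq_mul, mul_one, Nat.cast_sub (by omega : 1 ≤ q), Nat.cast_one]
    have hfib : ∀ t : F, t ^ q = t → t ≠ 0 → S t = S 1 := by
      intro t ht ht0
      have htinv : (t⁻¹ : F) ^ q = t⁻¹ := by rw [inv_pow, ht]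
      simp only [hS]
      refine Finset.sum_nbij' (fun x => t⁻¹ * x) (fun x => t * x) ?_ ?_ ?_ ?_ ?_
      · intro a ha
        rw [Finset.mem_filter] at ha ⊢
        refine ⟨Finset.mem_univ _, ?_⟩
        rw [mul_pow, htinv, ← mul_add, ha.2, inv_mul_cancel₀ ht0]
      · intro a ha
        rw [Finset.mem_filter] at ha ⊢
        refine ⟨Finset.mem_univ _, ?_⟩
        rw [mul_pow, ht, ← mul_add, ha.2, mul_one]
      · intro a _; field_simp
      · intro a _; field_simp
      · intro a _
        rw [map_mul, htriv t⁻¹ htinv (inv_ne_zero ht0), one_mul]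
    have htot : ∑ t ∈ Kf, S t = 0 := by
      simp only [hS]
      rw [Finset.sum_fiberwise_of_maps_to hmapsto (fun x => η x)]
      exact MulChar.sum_eq_zero_of_ne_one hη1
    have hSsplit : ∑ t ∈ Kf, S t = S 0 + ((q - 1 : ℕ) : ℂ) * S 1 := by
      rw [← Finset.add_sum_erase _ _ h0K]
      congr 1
      have hc1 : ∀ t ∈ Kf.erase 0, S t = S 1 := by
        intro t ht
        rw [Finset.mem_erase] at ht
        have ht2 := ht.2
        rw [hKf, Finset.mem_filter] at ht2
        exact hfib t ht2.2 ht.1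
      rw [Finset.sum_congr rfl hc1, Finset.sum_const, Finset.card_erase_of_mem h0K, hKf_eq,
        nsmul_eq_mul]
    have hq1C : ((q : ℂ) - 1) ≠ 0 := by
      have hq1 : (q : ℂ) ≠ 1 := by
        intro h
        have : (q : ℕ) = 1 := by exact_mod_cast h
        omega
      exact sub_ne_zero.mpr hq1
    have hS1 : S 1 = -1 := by
      rw [htot, hS0] at hSsplit
      rw [Nat.cast_sub (by omega : 1 ≤ q), Nat.cast_one] at hSsplit
      have h2 : ((q : ℂ) - 1) * (1 + S 1) = 0 := by linear_combination -hSsplit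
      rcases mul_eq_zero.mp h2 with h | h
      · exact absurd h hq1C
      · linear_combination h
    rw [hg, ← Finset.add_sum_erase _ _ h0K, AddChar.map_zero_eq_one, one_mul, hS0]
    have herase : ∑ t ∈ Kf.erase 0, ψ₁ t * S t = ∑ t ∈ Kf.erase 0, ψ₁ t * (-1) := by
      refine Finset.sum_congr rfl fun t ht => ?_
      rw [Finset.mem_erase] at ht
      have ht2 := ht.2
      rw [hKf, Finset.mem_filter] at ht2
      rw [hfib t ht2.2 ht.1, hS1]
    have hsum_erase : ∑ t ∈ Kf.erase 0, ψ₁ t = -1 := by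
      have h : ψ₁ 0 + ∑ t ∈ Kf.erase 0, ψ₁ t = ∑ t ∈ Kf, ψ₁ t :=
        Finset.add_sum_erase Kf _ h0K
      rw [hsumK, AddChar.map_zero_eq_one] at h
      linear_combination h
    rw [herase, ← Finset.sum_mul, hsum_erase]
    ring
  -- assembling everything via Jacobi sums
  have hne : ∀ k : ℕ, 0 < k → k < p → χ ^ k ≠ 1 := by
    intro k hk1 hk2 h
    have hd : p ∣ k := hχ ▸ orderOf_dvd_of_pow_eq_one h
    have := Nat.le_of_dvd hk1 hd
    omega
  have hχp : χ ^ p = 1 := hχ ▸ pow_orderOf_eq_one χ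
  have hppow : ∀ k : ℕ, (χ ^ k) ^ p = 1 := by
    intro k
    rw [← pow_mul, mul_comm, pow_mul, hχp, one_pow]
  have hprod : χ ^ r * χ ^ s = χ ^ (r + s) := (pow_add χ r s).symm
  have e1 := key (χ ^ r) (hne r hr (by omega)) (hppow r)
  have e2 := key (χ ^ s) (hne s hs (by omega)) (hppow s)
  have hne3 : χ ^ r * χ ^ s ≠ 1 := by
    rw [hprod]
    exact hne (r + s) (by omega) hrs
  have e3 := key (χ ^ r * χ ^ s) hne3 (by rw [hprod]; exact hppow (r + s))
  have hJ := jacobiSum_mul_nontrivial hne3 Ψ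
  rw [e1, e2, e3] at hJ
  have hq0 : (q : ℂ) ≠ 0 := Nat.cast_ne_zero.mpr (by omega)
  have hfinal : jacobiSum (χ ^ r) (χ ^ s) = (q : ℂ) := by
    have := mul_left_cancel₀ hq0 hJ
    rw [this]
  simpa only [jacobiSum] using hfinal
end

section
/- Let p ≥ 7 be a prime and let φ : ℤ/pℤ → ℤ/pℤ be the map induced by the integer polynomial ((1 − X)^p − 1 + X^p)/p. Then the fiber φ^{−1}(0) has at most p − 3 elements, and for every a ∈ ℤ/pℤ with a ≠ 0 the fiber φ^{−1}(a) has at most p − 4 elements. -/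
open Polynomial in
/-- Let `p ≥ 7` be a prime and let `φ : ℤ/pℤ → ℤ/pℤ` be the map induced
by the integer polynomial `((1 - X)^p - 1 + X^p)/p`. Then the fiber `φ⁻¹(0)` has at most
`p - 3` elements, and for every `a ∈ ℤ/pℤ` with `a ≠ 0` the fiber `φ⁻¹(a)` has at most
`p - 4` elements. -/
theorem statement4 (p : ℕ) [hp : Fact p.Prime] (hp7 : 7 ≤ p)
    (P : Polynomial ℤ) (hP : C (p : ℤ) * P = (1 - X) ^ p - 1 + X ^ p)
    (φ : ZMod p → ZMod p)
    (hφ : ∀ a : ZMod p, φ a = (P.map (Int.castRingHom (ZMod p))).eval a) :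
    (Finset.univ.filter fun x : ZMod p => φ x = 0).card ≤ p - 3 ∧
      ∀ a : ZMod p, a ≠ 0 → (Finset.univ.filter fun x : ZMod p => φ x = a).card ≤ p - 4 := by
  classical
  have hpp := hp.out
  have hodd : Odd p := hpp.odd_of_ne_two (by omega)
  have hpz : (p : ℤ) ≠ 0 := by exact_mod_cast (by omega : p ≠ 0)
  set Q : Polynomial (ZMod p) := P.map (Int.castRingHom (ZMod p)) with hQdef
  -- derivative of P
  have hder : derivative P = X ^ (p - 1) - (1 - X) ^ (p - 1) := by
    have h1 : C (p : ℤ) * derivative P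
        = C (p : ℤ) * (X ^ (p - 1) - (1 - X) ^ (p - 1)) := by
      have h2 := congrArg derivative hP
      rw [derivative_mul, derivative_C, zero_mul, zero_add] at h2
      rw [h2, derivative_add, derivative_sub, derivative_pow, derivative_pow,
        derivative_sub, derivative_one, derivative_X]
      ring
    exact mul_left_cancel₀ (by simpa using hpz) h1
  have hPne : P ≠ 0 := by
    intro h
    rw [h, derivative_zero] at hder
    have h3 := congrArg (eval 0) hder
    simp [zero_pow (show p - 1 ≠ 0 by omega)] at h3
  -- degree bound
  have hdeg : P.natDegree ≤ p - 1 := by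
    have hd1 : (1 - X : ℤ[X]).degree = 1 := by
      have h : (1 - X : ℤ[X]) = -(X - C 1) := by simp
      rw [h, degree_neg, degree_X_sub_C]
    have hlc1 : (1 - X : ℤ[X]).leadingCoeff = -1 := by
      have h : (1 - X : ℤ[X]) = -(X - C 1) := by simp
      rw [h, leadingCoeff_neg, (monic_X_sub_C (1 : ℤ)).leadingCoeff]
    have h1ne : (1 - X : ℤ[X]) ≠ 0 := by
      intro h; rw [h, degree_zero] at hd1; exact absurd hd1 (by simp)
    have hAB : ((1 - X : ℤ[X]) ^ p + X ^ p).degree < (p : WithBot ℕ) := by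
      have h := degree_sub_lt (p := (1 - X : ℤ[X]) ^ p) (q := -(X ^ p)) ?_ ?_ ?_
      · rw [sub_neg_eq_add] at h
        rwa [degree_pow, hd1, nsmul_eq_mul, mul_one] at h
      · rw [degree_pow, hd1, degree_neg, degree_X_pow, nsmul_eq_mul, mul_one]
      · exact pow_ne_zero _ h1ne
      · rw [leadingCoeff_pow, hlc1, leadingCoeff_neg, (monic_X_pow p).leadingCoeff]
        simp [Odd.neg_one_pow hodd]
    have hRdeg : ((1 - X : ℤ[X]) ^ p - 1 + X ^ p).degree < (p : WithBot ℕ) := by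
      have he : (1 - X : ℤ[X]) ^ p - 1 + X ^ p = ((1 - X) ^ p + X ^ p) - 1 := by ring
      rw [he]
      refine lt_of_le_of_lt (degree_sub_le _ _) (max_lt hAB ?_)
      rw [degree_one]
      exact_mod_cast (by omega : 0 < p)
    have hRne : ((1 - X : ℤ[X]) ^ p - 1 + X ^ p) ≠ 0 := by
      rw [← hP]; exact mul_ne_zero (by simpa using hpz) hPne
    have h5 : ((1 - X : ℤ[X]) ^ p - 1 + X ^ p).natDegree < p :=
      (natDegree_lt_iff_degree_lt hRne).2 (by exact_mod_cast hRdeg)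
    have h4 : P.natDegree = ((1 - X : ℤ[X]) ^ p - 1 + X ^ p).natDegree := by
      rw [← hP, natDegree_C_mul hpz]
    omega
  -- eval at 0 and 1
  have hP0 : P.eval 0 = 0 := by
    have h := congrArg (eval 0) hP
    simp [zero_pow (show p ≠ 0 by omega)] at h
    rcases h with h | h
    · omega
    · exact h
  have hP1 : P.eval 1 = 0 := by
    have h := congrArg (eval 1) hP
    simp [zero_pow (show p ≠ 0 by omega)] at h
    rcases h with h | h
    · omega
    · exact h
  have hQ0 : Q.eval 0 = 0 := by
    rw [hQdef, eval_zero_map, hP0]; simp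
  have hQ1 : Q.eval 1 = 0 := by
    rw [hQdef, eval_one_map, hP1]; simp
  -- derivative of Q
  have hQdeg : Q.natDegree ≤ p - 1 := le_trans natDegree_map_le hdeg
  have hQder : derivative Q = X ^ (p - 1) - (1 - X) ^ (p - 1) := by
    rw [hQdef, derivative_map, hder]
    simp [Polynomial.map_sub, Polynomial.map_pow, Polynomial.map_one]
  have hQdeval : ∀ x : ZMod p, x ≠ 0 → x ≠ 1 → (derivative Q).eval x = 0 := by
    intro x hx0 hx1
    rw [hQder]
    simp only [eval_sub, eval_pow, eval_one, eval_X]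
    rw [ZMod.pow_card_sub_one_eq_one hx0,
      ZMod.pow_card_sub_one_eq_one (sub_ne_zero.2 (Ne.symm hx1)), sub_self]
  have hQderne : derivative Q ≠ 0 := by
    intro h
    have h3 := congrArg (eval 0) (h.symm.trans hQder)
    simp [zero_pow (show p - 1 ≠ 0 by omega)] at h3
  have hQa_ne : ∀ a : ZMod p, Q - C a ≠ 0 := by
    intro a h
    have h2 : derivative (Q - C a) = 0 := by rw [h, derivative_zero]
    rw [derivative_sub, derivative_C, sub_zero] at h2
    exact hQderne h2
  -- multiplicity ≥ 2 away from 0,1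
  have hmult : ∀ (a x : ZMod p), x ≠ 0 → x ≠ 1 → Q.eval x = a →
      2 ≤ (Q - C a).rootMultiplicity x := by
    intro a x hx0 hx1 hxa
    refine (one_lt_rootMultiplicity_iff_isRoot (hQa_ne a)).2 ⟨?_, ?_⟩
    · simp [IsRoot, hxa]
    · rw [derivative_sub, derivative_C, sub_zero]
      exact hQdeval x hx0 hx1
  -- counting lemma
  have key : ∀ (a : ZMod p) (S : Finset (ZMod p)), (∀ x ∈ S, Q.eval x = a) →
      (S.sum fun x => (Q - C a).roots.count x) ≤ p - 1 := by
    intro a S hS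
    have hsub : S ⊆ (Q - C a).roots.toFinset := by
      intro x hx
      rw [Multiset.mem_toFinset, mem_roots (hQa_ne a)]
      simp [IsRoot, hS x hx]
    calc S.sum (fun x => (Q - C a).roots.count x)
        ≤ (Q - C a).roots.toFinset.sum (fun x => (Q - C a).roots.count x) :=
          Finset.sum_le_sum_of_subset hsub
      _ = Multiset.card (Q - C a).roots := (Q - C a).roots.toFinset_sum_count_eq
      _ ≤ (Q - C a).natDegree := card_roots' _
      _ ≤ p - 1 := le_trans (natDegree_sub_le _ _) (by simpa using hQdeg)
  refine ⟨?_, ?_⟩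
  · -- fiber of 0
    set S := Finset.univ.filter fun x : ZMod p => φ x = 0 with hS
    have hSmem : ∀ x, x ∈ S ↔ Q.eval x = 0 := by
      intro x; simp [hS, Finset.mem_filter, hφ x]
    have h0S : (0 : ZMod p) ∈ S := (hSmem 0).2 hQ0
    have h1S : (1 : ZMod p) ∈ S := (hSmem 1).2 hQ1
    have hsub01 : ({0, 1} : Finset (ZMod p)) ⊆ S := by
      intro x hx
      rcases Finset.mem_insert.1 hx with h | h
      · exact h ▸ h0S
      · exact (Finset.mem_singleton.1 h) ▸ h1S
    have h01card : ({0, 1} : Finset (ZMod p)).card = 2 := by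
      rw [Finset.card_insert_of_notMem (by simp), Finset.card_singleton]
    have hsum_eq := Finset.sum_sdiff (f := fun x => (Q - C 0).roots.count x) hsub01
    have hTsum : 2 * (S \ ({0, 1} : Finset (ZMod p))).card
        ≤ ∑ x ∈ S \ ({0, 1} : Finset (ZMod p)), (Q - C 0).roots.count x := by
      have hT : ∀ x ∈ S \ ({0, 1} : Finset (ZMod p)), 2 ≤ (Q - C 0).roots.count x := by
        intro x hx
        obtain ⟨hxS, hx01⟩ := Finset.mem_sdiff.1 hx
        simp only [Finset.mem_insert, Finset.mem_singleton, not_or] at hx01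
        rw [count_roots]
        exact hmult 0 x hx01.1 hx01.2 ((hSmem x).1 hxS)
      calc 2 * (S \ ({0, 1} : Finset (ZMod p))).card
          = ∑ _x ∈ S \ ({0, 1} : Finset (ZMod p)), 2 := by
            rw [Finset.sum_const, smul_eq_mul, mul_comm]
        _ ≤ _ := Finset.sum_le_sum hT
    have h01sum : 2 ≤ ∑ x ∈ ({0, 1} : Finset (ZMod p)), (Q - C 0).roots.count x := by
      have c0 : 1 ≤ (Q - C 0).roots.count 0 := by
        rw [count_roots]
        exact (rootMultiplicity_pos (hQa_ne 0)).2 (by simp [IsRoot, hQ0])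
      have c1 : 1 ≤ (Q - C 0).roots.count 1 := by
        rw [count_roots]
        exact (rootMultiplicity_pos (hQa_ne 0)).2 (by simp [IsRoot, hQ1])
      rw [Finset.sum_insert (by simp), Finset.sum_singleton]
      omega
    have hcard : (S \ ({0, 1} : Finset (ZMod p))).card = S.card - 2 := by
      rw [Finset.card_sdiff_of_subset hsub01, h01card]
    have hS2 : 2 ≤ S.card := h01card ▸ Finset.card_le_card hsub01
    have hkey := key 0 S (fun x hx => (hSmem x).1 hx)
    have h1 : 2 * (S.card - 2) + 2 ≤ p - 1 := by
      rw [← hcard]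
      calc 2 * (S \ ({0, 1} : Finset (ZMod p))).card + 2
          ≤ (∑ x ∈ S \ ({0, 1} : Finset (ZMod p)), (Q - C 0).roots.count x)
            + ∑ x ∈ ({0, 1} : Finset (ZMod p)), (Q - C 0).roots.count x :=
            Nat.add_le_add hTsum h01sum
        _ = ∑ x ∈ S, (Q - C 0).roots.count x := hsum_eq
        _ ≤ p - 1 := hkey
    omega
  · -- fiber of a ≠ 0
    intro a ha
    set S := Finset.univ.filter fun x : ZMod p => φ x = a with hS
    have hSmem : ∀ x, x ∈ S ↔ Q.eval x = a := by
      intro x; simp [hS, Finset.mem_filter, hφ x]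
    have hall : ∀ x ∈ S, 2 ≤ (Q - C a).roots.count x := by
      intro x hx
      have hxa := (hSmem x).1 hx
      have hx0 : x ≠ 0 := by rintro rfl; rw [hQ0] at hxa; exact ha hxa.symm
      have hx1 : x ≠ 1 := by rintro rfl; rw [hQ1] at hxa; exact ha hxa.symm
      rw [count_roots]
      exact hmult a x hx0 hx1 hxa
    have h1 : 2 * S.card ≤ p - 1 := by
      calc 2 * S.card = ∑ _x ∈ S, 2 := by rw [Finset.sum_const, smul_eq_mul, mul_comm]
        _ ≤ ∑ x ∈ S, (Q - C a).roots.count x := Finset.sum_le_sum hall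
        _ ≤ p - 1 := key a S (fun x hx => (hSmem x).1 hx)
    omega
end

section
/- Let p be an odd prime, K = ℚ(ζ) the p-th cyclotomic field, and F = ℚ(ζ + ζ⁻¹) its maximal real subfield. Then the relative different ideal of 𝓞_K over 𝓞_F is the principal ideal of 𝓞_K generated by ζ − ζ⁻¹. -/
open NumberField

open Polynomial in
set_option synthInstance.maxHeartbeats 1000000 in
set_option maxHeartbeats 1600000 in
/-- Let `p` be an odd prime, `K = ℚ(ζ)` the `p`-th cyclotomic field, and
`F = ℚ(ζ + ζ⁻¹)` its maximal real subfield. Then the relative different ideal of `𝓞_K` over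
`𝓞_F` is the principal ideal of `𝓞_K` generated by `ζ - ζ⁻¹`. -/
theorem statement7 (p : ℕ) (hp : p.Prime) (hodd : Odd p)
    (K : Type*) [Field K] [NumberField K]
    [IsCyclotomicExtension {p} ℚ K]
    (ζ : K) (hζ : IsPrimitiveRoot ζ p)
    (F : IntermediateField ℚ K) (hF : F = IntermediateField.adjoin ℚ {ζ + ζ⁻¹})
    (x : 𝓞 K) (hx : algebraMap (𝓞 K) K x = ζ - ζ⁻¹) :
    differentIdeal (𝓞 F) (𝓞 K) = Ideal.span {x} := by
  haveI : Fact (Nat.Prime (PNat.val ⟨p, hp.pos⟩)) := ⟨hp⟩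
  haveI : Fact (Nat.Prime ((⟨p, hp.pos⟩ : ℕ+) : ℕ)) := ⟨hp⟩
  have hζ' : IsPrimitiveRoot ζ p := hζ
  have hint : IsIntegral ℤ ζ := hζ.isIntegral hp.pos
  have hζ0 : ζ ≠ 0 := hζ'.ne_zero hp.pos.ne'
  have hζinv : ζ * ζ⁻¹ = 1 := mul_inv_cancel₀ hζ0
  -- ζ ∉ F
  have hζne : ζ ≠ ζ⁻¹ := by
    intro h
    have h2 : ζ ^ 2 = 1 := by rw [pow_two]; nth_rewrite 2 [h]; exact hζinv
    have := hζ.dvd_of_pow_eq_one 2 h2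
    have := (Nat.prime_dvd_prime_iff_eq hp Nat.prime_two).mp this
    rw [this] at hodd
    exact (Nat.not_odd_iff_even.mpr even_two) hodd
  have hmin : minpoly ℚ ζ = minpoly ℚ ζ⁻¹ := by
    rw [← Polynomial.cyclotomic_eq_minpoly_rat hζ hp.pos,
      ← Polynomial.cyclotomic_eq_minpoly_rat hζ.inv hp.pos]
  have pb := hζ'.powerBasis ℚ
  have hroot : aeval ζ⁻¹ (minpoly ℚ (hζ'.powerBasis ℚ).gen) = 0 := by
    rw [hζ'.powerBasis_gen ℚ, hmin]
    exact minpoly.aeval ℚ ζ⁻¹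
  set σ : K →ₐ[ℚ] K := (hζ'.powerBasis ℚ).lift ζ⁻¹ hroot with hσ
  have hσζ : σ ζ = ζ⁻¹ := by
    have := (hζ'.powerBasis ℚ).lift_gen ζ⁻¹ hroot
    rwa [hζ'.powerBasis_gen ℚ] at this
  have hσα : σ (ζ + ζ⁻¹) = ζ + ζ⁻¹ := by
    rw [map_add, map_inv₀, hσζ, inv_inv, add_comm]
  have hnotF : ζ ∉ F := by
    intro hmem
    rw [hF] at hmem
    have hαint : IsIntegral ℚ (ζ + ζ⁻¹) := Algebra.IsIntegral.isIntegral _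
    have hmem : ζ ∈ Algebra.adjoin ℚ ({ζ + ζ⁻¹} : Set K) := by
      rw [← IntermediateField.adjoin_simple_toSubalgebra_of_isAlgebraic hαint.isAlgebraic]
      exact hmem
    have : Algebra.adjoin ℚ ({ζ + ζ⁻¹} : Set K) ≤ AlgHom.equalizer σ (AlgHom.id ℚ K) := by
      apply Algebra.adjoin_le
      rintro y rfl
      exact hσα
    have := this hmem
    have : σ ζ = ζ := this
    rw [hσζ] at this
    exact hζne this.symm
  -- the element α = ζ + ζ⁻¹ in F
  have hαF : ζ + ζ⁻¹ ∈ F := by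
    rw [hF]; exact IntermediateField.mem_adjoin_simple_self ℚ _
  set α : F := ⟨ζ + ζ⁻¹, hαF⟩ with hα
  have hαK : algebraMap F K α = ζ + ζ⁻¹ := rfl
  -- the minimal polynomial of ζ over F
  set q : Polynomial F := X ^ 2 - C α * X + 1 with hq
  have hqmonic : q.Monic := by
    rw [hq]; monicity!
  have hintF : IsIntegral F ζ := Algebra.IsIntegral.isIntegral _
  have haq : aeval ζ q = 0 := by
    rw [hq]
    simp only [map_add, map_sub, map_pow, map_mul, map_one, aeval_X, aeval_C, hαK]
    field_simp
    ring
  have hqdeg : q.natDegree = 2 := by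
    rw [hq]; compute_degree!
  have hmq : minpoly F ζ = q := by
    have hdvd : minpoly F ζ ∣ q := minpoly.dvd F ζ haq
    have hdegle : (minpoly F ζ).natDegree ≤ 2 := by
      rw [← hqdeg]
      exact Polynomial.natDegree_le_of_dvd hdvd hqmonic.ne_zero
    have hdegge : 2 ≤ (minpoly F ζ).natDegree := by
      rw [minpoly.two_le_natDegree_iff hintF]
      rintro ⟨y, rfl⟩
      exact hnotF (SetLike.coe_mem y)
    obtain ⟨c, hc⟩ := hdvd
    have hm : (minpoly F ζ).Monic := minpoly.monic hintF
    have hc0 : c ≠ 0 := by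
      rintro rfl
      rw [mul_zero] at hc
      exact hqmonic.ne_zero hc
    have hcdeg : c.natDegree = 0 := by
      have := hc ▸ Polynomial.natDegree_mul hm.ne_zero hc0
      omega
    have hclc : c.leadingCoeff = 1 := by
      have : q.leadingCoeff = (minpoly F ζ).leadingCoeff * c.leadingCoeff := by
        rw [hc, Polynomial.leadingCoeff_mul]
      rwa [hqmonic.leadingCoeff, hm.leadingCoeff, one_mul, eq_comm] at this
    have hc1 : c = 1 := Polynomial.eq_one_of_monic_natDegree_zero hclc hcdeg
    rw [hc, hc1, mul_one]
  -- integer level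
  set η : 𝓞 K := hζ'.toInteger with hη
  have hηcoe : algebraMap (𝓞 K) K η = ζ := rfl
  have hadjZ : Algebra.adjoin ℤ ({η} : Set (𝓞 K)) = ⊤ :=
    IsCyclotomicExtension.adjoin_primitive_root_eq_top
      (n := p) hζ'.toInteger_isPrimitiveRoot
  have hadjO : Algebra.adjoin (𝓞 F) ({η} : Set (𝓞 K)) = ⊤ := by
    rw [eq_top_iff]
    intro y _
    have h2 : Algebra.adjoin ℤ ({η} : Set (𝓞 K)) ≤
        Subalgebra.restrictScalars ℤ (Algebra.adjoin (𝓞 F) {η}) :=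
      Algebra.adjoin_le fun z hz => Algebra.subset_adjoin hz
    exact h2 (hadjZ ▸ Algebra.mem_top)
  have hadjF : Algebra.adjoin F {algebraMap (𝓞 K) K η} = ⊤ := by
    rw [hηcoe, eq_top_iff]
    intro y _
    have hQ : Algebra.adjoin ℚ ({ζ} : Set K) = ⊤ :=
      IsCyclotomicExtension.adjoin_primitive_root_eq_top hζ'
    have h2 : Algebra.adjoin ℚ ({ζ} : Set K) ≤
        Subalgebra.restrictScalars ℚ (Algebra.adjoin F {ζ}) :=
      Algebra.adjoin_le fun z hz => Algebra.subset_adjoin hz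
    exact h2 (hQ ▸ Algebra.mem_top)
  have key := conductor_mul_differentIdeal (𝓞 F) F K η hadjF
  rw [conductor_eq_top_of_adjoin_eq_top hadjO, Ideal.top_mul] at key
  rw [key]
  -- the generator equals x
  have hintO : IsIntegral (𝓞 F) η := Algebra.IsIntegral.isIntegral _
  have hmap : minpoly F ζ = (minpoly (𝓞 F) η).map (algebraMap (𝓞 F) F) := by
    have h3 := minpoly.isIntegrallyClosed_eq_field_fractions F K hintO
    rwa [hηcoe] at h3
  have hgen : aeval η (derivative (minpoly (𝓞 F) η)) = x := by
    apply RingOfIntegers.coe_injective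
    rw [← Polynomial.aeval_algebraMap_apply, hηcoe, hx]
    have h4 : aeval ζ (derivative (minpoly (𝓞 F) η)) = aeval ζ (derivative (minpoly F ζ)) := by
      rw [hmap, derivative_map, aeval_map_algebraMap]
    rw [h4, hmq, hq]
    have hd : derivative ((X : (↥F)[X]) ^ 2 - C α * X + 1) = C 2 * X - C α := by
      simp only [derivative_add, derivative_sub, derivative_one, derivative_mul, derivative_C,
        derivative_X, derivative_X_pow]
      ring_nf
    rw [hd]
    simp only [map_add, map_sub, map_mul, aeval_X, aeval_C, hαK, map_ofNat]
    ring
  rw [hgen]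
end

section
/- Let p be an odd prime and ζ a primitive p-th root of unity. Then in ℤ[ζ] one has the congruence (1 + (ζ − ζ⁻¹)^p)·(1 + (1 − ζ)^p)² ≡ 1 modulo the ideal generated by (1 − ζ)^{p+1}. -/
open NumberField

/-- Let `p` be an odd prime and `ζ` a primitive `p`-th root of unity. Then
in `ℤ[ζ]` (the ring of integers of the `p`-th cyclotomic field) one has the congruence
`(1 + (ζ - ζ⁻¹)^p)·(1 + (1 - ζ)^p)² ≡ 1` modulo the ideal generated by `(1 - ζ)^(p+1)`.
Here `ζ'` denotes the inverse `ζ⁻¹` of `ζ` in the ring of integers. -/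
theorem statement9 (p : ℕ) (hp : p.Prime) (hodd : Odd p)
    (K : Type*) [Field K] [Algebra ℚ K]
    [IsCyclotomicExtension {p} ℚ K]
    (ζ ζ' : 𝓞 K) (hζ : IsPrimitiveRoot ζ p) (hζ' : ζ * ζ' = 1) :
    (1 + (ζ - ζ') ^ p) * (1 + (1 - ζ) ^ p) ^ 2 - 1 ∈
      Ideal.span {(1 - ζ) ^ (p + 1)} := by
  rw [Ideal.mem_span_singleton]
  set lam : 𝓞 K := 1 - ζ with hlam
  haveI : Fact (Nat.Prime p) := ⟨hp⟩
  have hp1' : 1 ≤ p := hp.pos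
  -- ζ - 1 divides p
  have hdvd_p : (ζ - 1) ∣ (p : 𝓞 K) := by
    haveI : CharZero K := charZero_of_injective_algebraMap (algebraMap ℚ K).injective
    haveI h1 : Fact (Nat.Prime p) := ⟨hp⟩
    haveI hcy : @IsCyclotomicExtension {p} ℚ K _ _
        (DivisionRing.toRatAlgebra) := by
      rwa [Subsingleton.elim (DivisionRing.toRatAlgebra : Algebra ℚ K) ‹Algebra ℚ K›]
    haveI := IsCyclotomicExtension.numberField {p} ℚ K
    have hζK : IsPrimitiveRoot ((algebraMap (𝓞 K) K) ζ) (p : ℕ) :=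
      hζ.map_of_injective (IsFractionRing.injective (𝓞 K) K)
    have := hζK.toInteger_sub_one_dvd_prime' (K := K) (p := p) (hp := h1)
    have he : hζK.toInteger = ζ := by ext; rfl
    rwa [he] at this
  have hlam_p : lam ∣ (p : 𝓞 K) := by
    rw [hlam, show (1 : 𝓞 K) - ζ = -(ζ - 1) by ring]
    exact neg_dvd.mpr hdvd_p
  -- λ divides 1 - ζ'
  have hlam_z' : lam ∣ (1 - ζ') := ⟨-ζ', by rw [hlam]; ring_nf; linear_combination -hζ'⟩
  -- p divides 2^p - 2 in ℤ, hence in 𝓞 K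
  have hfermat : (p : ℤ) ∣ (2 ^ p - 2) := by
    have h0 : ((2 ^ p - 2 : ℤ) : ZMod p) = 0 := by
      push_cast
      rw [ZMod.pow_card]
      ring
    exact (ZMod.intCast_zmod_eq_zero_iff_dvd _ p).mp h0
  have hfermatO : (p : 𝓞 K) ∣ (2 ^ p - 2 : 𝓞 K) := by
    obtain ⟨c, hc⟩ := hfermat
    refine ⟨(c : 𝓞 K), ?_⟩
    exact_mod_cast congrArg (fun z : ℤ => (z : 𝓞 K)) hc
  -- λ divides 2 - (1+ζ')^p
  have key : lam ∣ (2 - (1 + ζ') ^ p) := by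
    have h1 : lam ∣ (2 : 𝓞 K) ^ p - (1 + ζ') ^ p := by
      refine dvd_trans ?_ (sub_dvd_pow_sub_pow 2 (1 + ζ') p)
      rw [show (2 : 𝓞 K) - (1 + ζ') = 1 - ζ' from by ring]
      exact hlam_z'
    have h2 : lam ∣ (2 - 2 ^ p : 𝓞 K) := by
      have := hlam_p.trans hfermatO
      simpa using this.neg_right
    have := dvd_add h2 h1
    simpa using this
  -- the factorization of ζ - ζ'
  have hfac : (ζ - ζ') ^ p = -((1 + ζ') ^ p * lam ^ p) := by
    have h : ζ - ζ' = -(lam * (1 + ζ')) := by rw [hlam]; linear_combination -hζ'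
    rw [h, hodd.neg_pow, mul_pow]; ring
  -- main computation
  obtain ⟨a, ha⟩ := key
  have hgoal : (1 + (ζ - ζ') ^ p) * (1 + (1 - ζ) ^ p) ^ 2 - 1 =
      lam ^ (p + 1) * (a + lam ^ (p - 1) * ((1 - 2 * (1 + ζ') ^ p)
        - (1 + ζ') ^ p * lam ^ p)) := by
    have hp1 : p - 1 + (p + 1) = 2 * p := by omega
    rw [hfac]
    have expand : (1 + -((1 + ζ') ^ p * lam ^ p)) * (1 + lam ^ p) ^ 2 - 1 =
        lam ^ p * (2 - (1 + ζ') ^ p) + lam ^ p * lam ^ p * ((1 - 2 * (1 + ζ') ^ p)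
          - (1 + ζ') ^ p * lam ^ p) := by ring
    rw [← hlam, expand, ha]
    have hpow : lam ^ p * lam ^ p = lam ^ (p + 1) * lam ^ (p - 1) := by
      rw [← pow_add, ← pow_add, show p + p = p + 1 + (p - 1) from by omega]
    rw [hpow]
    ring
  exact ⟨_, hgoal⟩
end

section
/- Let p be an odd prime, r an integer with 1 ≤ r ≤ p − 2, δ a nonzero integer, and ℓ a prime with ℓ ∣ δ, ℓ ≠ p and ℓ ∤ (r + 1). Then there exist ℓ-adic integers x, y ∈ ℤ_ℓ with y^p = x^r·(δ − x) and x ≡ 1 (mod ℓ). -/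
open Polynomial

/-- Let `p` be an odd prime, `r` an integer with `1 ≤ r ≤ p - 2`, `δ` a
nonzero integer, and `ℓ` a prime with `ℓ ∣ δ`, `ℓ ≠ p`, `ℓ ∤ (r + 1)`. Then there exist
`ℓ`-adic integers `x, y ∈ ℤ_ℓ` with `y^p = x^r·(δ - x)` and `x ≡ 1 (mod ℓ)`. -/
theorem statement10 (p : ℕ) (hp : p.Prime) (hodd : Odd p)
    (r : ℕ) (hr1 : 1 ≤ r) (hr2 : r ≤ p - 2)
    (δ : ℤ) (hδ : δ ≠ 0)
    (ℓ : ℕ) [hℓ : Fact ℓ.Prime] (hℓδ : (ℓ : ℤ) ∣ δ) (hℓp : ℓ ≠ p)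
    (hℓr : ¬ (ℓ : ℤ) ∣ (r + 1 : ℤ)) :
    ∃ x y : ℤ_[ℓ], y ^ p = x ^ r * ((δ : ℤ_[ℓ]) - x) ∧ (ℓ : ℤ_[ℓ]) ∣ (x - 1) := by
  have hdvd : (ℓ : ℤ_[ℓ]) ∣ (δ : ℤ_[ℓ]) := by
    obtain ⟨k, hk⟩ := hℓδ
    exact ⟨(k : ℤ_[ℓ]), by rw [hk]; push_cast; ring⟩
  set F : Polynomial ℤ_[ℓ] := C (δ : ℤ_[ℓ]) * X ^ r - X ^ (r + 1) + 1 with hFdef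
  have hF1 : F.eval 1 = (δ : ℤ_[ℓ]) := by simp [hFdef]
  have hF' : F.derivative.eval 1 = (r : ℤ_[ℓ]) * δ - (r + 1) := by
    simp [hFdef, derivative_X_pow]
    ring
  have hdnd : ¬ (ℓ : ℤ_[ℓ]) ∣ ((r : ℤ_[ℓ]) * δ - (r + 1)) := by
    intro h
    apply hℓr
    have h2 : (ℓ : ℤ_[ℓ]) ∣ ((r : ℤ_[ℓ]) + 1) := by
      have : (ℓ : ℤ_[ℓ]) ∣ (r : ℤ_[ℓ]) * δ := Dvd.dvd.mul_left hdvd _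
      have := dvd_sub this h
      simpa using this
    rw [← PadicInt.norm_int_lt_one_iff_dvd]
    rw [← PadicInt.norm_lt_one_iff_dvd] at h2
    convert h2 using 2
    push_cast
    ring
  have hnorm1 : ‖F.derivative.eval 1‖ = 1 := by
    rw [hF']
    refine le_antisymm (PadicInt.norm_le_one _) ?_
    by_contra hlt
    push_neg at hlt
    exact hdnd (PadicInt.norm_lt_one_iff_dvd _ |>.mp hlt)
  have hlt : ‖F.eval 1‖ < ‖F.derivative.eval 1‖ ^ 2 := by
    rw [hF1, hnorm1, one_pow]
    exact (PadicInt.norm_lt_one_iff_dvd _).mpr hdvd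
  obtain ⟨z, hz, hzlt, -, -⟩ := hensels_lemma hlt
  refine ⟨z, -1, ?_, ?_⟩
  · rw [hodd.neg_one_pow]
    have : z ^ r * ((δ : ℤ_[ℓ]) - z) + 1 = 0 := by
      rw [← hz]; simp [hFdef]; ring
    linear_combination -this
  · rw [Polynomial.coe_aeval_eq_eval, hnorm1] at hzlt
    exact (PadicInt.norm_lt_one_iff_dvd _).mp hzlt
end
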